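/- Let σ₁ ⊆ ℝ² be nonempty compact, α a half-plane-affine map, and σ₂ = α(σ₁). Then the map f ↦ f ∘ α⁻¹ is a bounded algebra isomorphism from BV(σ₁) onto BV(σ₂), with ‖f ∘ α⁻¹‖_{BV(σ₂)} ≤ 2‖f‖_{BV(σ₁)}. -/

import Mathlib

/-- `[x i, x (i+1)]` is a crossing segment of the list `x₀, …, xₙ` on the line
`{p | g p = c}` (where `g` is a nonzero linear functional). -/
def IsCrossing {n : ℕ} (x : Fin (n + 1) → ℝ × ℝ) (g : ℝ × ℝ →ₗ[ℝ] ℝ) (c : ℝ)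
    (i : Fin n) : Prop :=
  (g (x i.castSucc) < c ∧ c < g (x i.succ)) ∨
  (g (x i.succ) < c ∧ c < g (x i.castSucc)) ∨
  ((i : ℕ) = 0 ∧ g (x i.castSucc) = c) ∨
  (0 < (i : ℕ) ∧ g (x i.castSucc) = c ∧
    g (x ⟨(i : ℕ) - 1, lt_of_le_of_lt (Nat.sub_le _ _) (Nat.lt_succ_of_lt i.isLt)⟩) ≠ c) ∨
  ((i : ℕ) = n - 1 ∧ g (x i.castSucc) ≠ c ∧ g (x i.succ) = c)

/-- `vf(S, ℓ)`: the number of crossing segments of the list on the line `{p | g p = c}`. -/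
noncomputable def vfOn {n : ℕ} (x : Fin (n + 1) → ℝ × ℝ) (g : ℝ × ℝ →ₗ[ℝ] ℝ) (c : ℝ) : ℕ :=
  {i : Fin n | IsCrossing x g c i}.ncard

/-- `vf(S)`: the variation factor of the list, the maximum of `vf(S, ℓ)` over all lines. -/
noncomputable def vf {n : ℕ} (x : Fin (n + 1) → ℝ × ℝ) : ℕ :=
  sSup {k : ℕ | ∃ (g : ℝ × ℝ →ₗ[ℝ] ℝ) (c : ℝ), g ≠ 0 ∧ k = vfOn x g c}

/-- `cvar(f, S)`: the curve variation of `f` along the list. -/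
noncomputable def cvar {n : ℕ} (f : ℝ × ℝ → ℂ) (x : Fin (n + 1) → ℝ × ℝ) : ℝ :=
  ∑ i : Fin n, ‖f (x i.succ) - f (x i.castSucc)‖

/-- The set of quotients `cvar(f,S)/vf(S)` over finite lists `S` in `σ`. -/
def varSet (f : ℝ × ℝ → ℂ) (σ : Set (ℝ × ℝ)) : Set ℝ :=
  {r : ℝ | ∃ (n : ℕ) (x : Fin (n + 1) → ℝ × ℝ), (∀ i, x i ∈ σ) ∧ r = cvar f x / (vf x : ℝ)}

/-- `var(f, σ)`: the two-dimensional variation of `f` on `σ`. -/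
noncomputable def var2 (f : ℝ × ℝ → ℂ) (σ : Set (ℝ × ℝ)) : ℝ :=
  sSup (varSet f σ)

/-- `f` is of bounded variation on `σ`: it is bounded on `σ` and the set of quotients
`cvar(f,S)/vf(S)` is bounded above. -/
def MemBV (f : ℝ × ℝ → ℂ) (σ : Set (ℝ × ℝ)) : Prop :=
  BddAbove ((fun z => ‖f z‖) '' σ) ∧ BddAbove (varSet f σ)

/-- The `BV(σ)` norm `‖f‖_∞ + var(f,σ)`. -/
noncomputable def bvNorm (f : ℝ × ℝ → ℂ) (σ : Set (ℝ × ℝ)) : ℝ :=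
  sSup ((fun z => ‖f z‖) '' σ) + var2 f σ

/-- `α : ℝ² → ℝ²` is a half-plane-affine map: it is invertible and there is a half-plane
splitting `{f ≤ c}`, `{c ≤ f}` (with `f` a nonzero linear functional) on whose two closed
half-planes `α` agrees with affine maps `α₁`, `α₂` respectively. -/
def IsHalfPlaneAffine (α : ℝ × ℝ → ℝ × ℝ) : Prop :=
  Function.Bijective α ∧
    ∃ (f : ℝ × ℝ →ₗ[ℝ] ℝ) (c : ℝ), f ≠ 0 ∧
      ∃ (α₁ α₂ : ℝ × ℝ →ᵃ[ℝ] ℝ × ℝ),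
        (∀ p : ℝ × ℝ, f p ≤ c → α p = α₁ p) ∧ (∀ p : ℝ × ℝ, c ≤ f p → α p = α₂ p)

/-- crossing predicate for a value sequence, threshold 0 -/
def crossB {n : ℕ} (b : Fin (n + 1) → ℝ) (i : Fin n) : Prop :=
  (b i.castSucc < 0 ∧ 0 < b i.succ) ∨
  (b i.succ < 0 ∧ 0 < b i.castSucc) ∨
  ((i : ℕ) = 0 ∧ b i.castSucc = 0) ∨
  (0 < (i : ℕ) ∧ b i.castSucc = 0 ∧
    b ⟨(i : ℕ) - 1, lt_of_le_of_lt (Nat.sub_le _ _) (Nat.lt_succ_of_lt i.isLt)⟩ ≠ 0) ∨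
  ((i : ℕ) = n - 1 ∧ b i.castSucc ≠ 0 ∧ b i.succ = 0)

lemma isCrossing_iff_crossB {n : ℕ} (x : Fin (n + 1) → ℝ × ℝ) (g : ℝ × ℝ →ₗ[ℝ] ℝ) (c : ℝ)
    (i : Fin n) : IsCrossing x g c i ↔ crossB (fun j => g (x j) - c) i := by
  simp only [IsCrossing, crossB, sub_neg, sub_pos, sub_eq_zero, sub_ne_zero]

/-- previous segment index -/
def pvi {n : ℕ} (i : Fin n) : Fin n := ⟨(i : ℕ) - 1, lt_of_le_of_lt (Nat.sub_le _ _) i.isLt⟩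

lemma crossB_neg {n : ℕ} (b : Fin (n + 1) → ℝ) (i : Fin n) :
    crossB (fun j => -(b j)) i ↔ crossB b i := by
  simp only [crossB, neg_lt_zero, neg_pos, neg_eq_zero, ne_eq]
  constructor <;> intro h <;>
    rcases h with ⟨h1, h2⟩ | ⟨h1, h2⟩ | ⟨h1, h2⟩ | ⟨h1, h2, h3⟩ | ⟨h1, h2, h3⟩
  · exact Or.inr (Or.inl ⟨h2, h1⟩)
  · exact Or.inl ⟨h2, h1⟩
  · exact Or.inr (Or.inr (Or.inl ⟨h1, h2⟩))
  · exact Or.inr (Or.inr (Or.inr (Or.inl ⟨h1, h2, h3⟩)))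
  · exact Or.inr (Or.inr (Or.inr (Or.inr ⟨h1, h2, h3⟩)))
  · exact Or.inr (Or.inl ⟨h2, h1⟩)
  · exact Or.inl ⟨h2, h1⟩
  · exact Or.inr (Or.inr (Or.inl ⟨h1, h2⟩))
  · exact Or.inr (Or.inr (Or.inr (Or.inl ⟨h1, h2, h3⟩)))
  · exact Or.inr (Or.inr (Or.inr (Or.inr ⟨h1, h2, h3⟩)))

lemma pvi_castSucc {n : ℕ} (i : Fin n) :
    (pvi i).castSucc = (⟨(i : ℕ) - 1, lt_of_le_of_lt (Nat.sub_le _ _) (Nat.lt_succ_of_lt i.isLt)⟩ : Fin (n+1)) := by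
  ext; simp [pvi]

lemma pvi_succ {n : ℕ} (i : Fin n) (hi : 0 < (i : ℕ)) : (pvi i).succ = i.castSucc := by
  ext; simp [pvi]; omega

/-- case-4 helper, asymmetric in `p`, `q` -/
lemma case4_aux {n : ℕ} (p q b : Fin (n + 1) → ℝ) (hb : ∀ j, b j = max (p j) (q j))
    (i : Fin n) (hip : 0 < (i : ℕ)) (hB0 : b i.castSucc = 0)
    (hBp : b (⟨(i : ℕ) - 1, lt_of_le_of_lt (Nat.sub_le _ _) (Nat.lt_succ_of_lt i.isLt)⟩ : Fin (n+1)) ≠ 0)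
    (hp0 : p i.castSucc = 0) :
    crossB p i ∨ crossB q i ∨
      (0 < (i : ℕ) ∧ ¬ crossB b (pvi i) ∧ (crossB p (pvi i) ∨ crossB q (pvi i))) := by
  set ip : Fin (n + 1) :=
    (⟨(i : ℕ) - 1, lt_of_le_of_lt (Nat.sub_le _ _) (Nat.lt_succ_of_lt i.isLt)⟩ : Fin (n+1)) with hipdef
  have hq0 : q i.castSucc ≤ 0 := by
    have := hb i.castSucc; rw [hB0] at this; exact (le_max_right _ _).trans this.ge
  rcases lt_trichotomy (b ip) 0 with hneg | hz | hpos
  · -- previous value negative: p there is negative, clause 4 of p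
    have : p ip < 0 := lt_of_le_of_lt (by rw [hb ip]; exact le_max_left _ _) hneg
    exact Or.inl (Or.inr (Or.inr (Or.inr (Or.inl ⟨hip, hp0, ne_of_lt this⟩))))
  · exact absurd hz hBp
  · by_cases hpp : p ip = 0
    · -- p previous zero, so q previous positive
      have hqip : 0 < q ip := by
        have := hb ip; rw [this] at hpos
        rcases lt_max_iff.mp hpos with h | h
        · exact absurd hpp (ne_of_gt h)
        · exact h
      by_cases hqq : q i.castSucc = 0
      · exact Or.inr (Or.inl (Or.inr (Or.inr (Or.inr (Or.inl ⟨hip, hqq, ne_of_gt hqip⟩)))))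
      · -- exceptional case
        have hqlt : q i.castSucc < 0 := lt_of_le_of_ne hq0 hqq
        refine Or.inr (Or.inr ⟨hip, ?_, Or.inr ?_⟩)
        · -- b has no crossing at pvi i
          intro hc
          have e1 : (pvi i).castSucc = ip := pvi_castSucc i
          have e2 : (pvi i).succ = i.castSucc := pvi_succ i hip
          rcases hc with ⟨h1, h2⟩ | ⟨h1, h2⟩ | ⟨h1, h2⟩ | ⟨h1, h2, h3⟩ | ⟨h1, h2, h3⟩
          · rw [e1] at h1; linarith
          · rw [e2, hB0] at h1; linarith
          · rw [e1] at h2; linarith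
          · rw [e1] at h2; linarith
          · have := i.isLt; simp [pvi] at h1; omega
        · -- q crosses (clause 2) at pvi i
          have e1 : (pvi i).castSucc = ip := pvi_castSucc i
          have e2 : (pvi i).succ = i.castSucc := pvi_succ i hip
          exact Or.inr (Or.inl ⟨by rw [e2]; exact hqlt, by rw [e1]; exact hqip⟩)
    · exact Or.inl (Or.inr (Or.inr (Or.inr (Or.inl ⟨hip, hp0, hpp⟩))))

/-- case-5 helper, asymmetric in `p`, `q` -/
lemma case5_aux {n : ℕ} (p q b : Fin (n + 1) → ℝ) (hb : ∀ j, b j = max (p j) (q j))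
    (i : Fin n) (hin : (i : ℕ) = n - 1) (hB0 : b i.castSucc ≠ 0) (hB1 : b i.succ = 0)
    (hp1 : p i.succ = 0) :
    crossB p i ∨ crossB q i := by
  have hq1 : q i.succ ≤ 0 := by
    have := hb i.succ; rw [hB1] at this; exact (le_max_right _ _).trans this.ge
  rcases lt_trichotomy (b i.castSucc) 0 with hneg | hz | hpos
  · have : p i.castSucc < 0 := lt_of_le_of_lt (by rw [hb _]; exact le_max_left _ _) hneg
    exact Or.inl (Or.inr (Or.inr (Or.inr (Or.inr ⟨hin, ne_of_lt this, hp1⟩))))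
  · exact absurd hz hB0
  · by_cases hpp : p i.castSucc = 0
    · have hqc : 0 < q i.castSucc := by
        have := hb i.castSucc; rw [this] at hpos
        rcases lt_max_iff.mp hpos with h | h
        · exact absurd hpp (ne_of_gt h)
        · exact h
      by_cases hqq : q i.succ = 0
      · exact Or.inr (Or.inr (Or.inr (Or.inr (Or.inr ⟨hin, ne_of_gt hqc, hqq⟩))))
      · exact Or.inr (Or.inr (Or.inl ⟨lt_of_le_of_ne hq1 hqq, hqc⟩))
    · exact Or.inl (Or.inr (Or.inr (Or.inr (Or.inr ⟨hin, hpp, hp1⟩))))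

/-- Main claim: a crossing of `max p q` yields a crossing of `p` or `q` at the same index,
or (exceptionally) at the previous index, which is then not a crossing of `max p q`. -/
lemma crossB_max_claim {n : ℕ} (p q b : Fin (n + 1) → ℝ) (hb : ∀ j, b j = max (p j) (q j))
    (i : Fin n) (h : crossB b i) :
    crossB p i ∨ crossB q i ∨
      (0 < (i : ℕ) ∧ ¬ crossB b (pvi i) ∧ (crossB p (pvi i) ∨ crossB q (pvi i))) := by
  have hb' : ∀ j, b j = max (q j) (p j) := fun j => (hb j).trans (max_comm _ _)
  rcases h with ⟨hB0, hB1⟩ | ⟨hB1, hB0⟩ | ⟨hi0, hB0⟩ | ⟨hip, hB0, hBp⟩ | ⟨hin, hB0, hB1⟩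
  · -- clause 1
    have hp0 : p i.castSucc < 0 := lt_of_le_of_lt (by rw [hb _]; exact le_max_left _ _) hB0
    have hq0 : q i.castSucc < 0 := lt_of_le_of_lt (by rw [hb _]; exact le_max_right _ _) hB0
    rw [hb _] at hB1
    rcases lt_max_iff.mp hB1 with h | h
    · exact Or.inl (Or.inl ⟨hp0, h⟩)
    · exact Or.inr (Or.inl (Or.inl ⟨hq0, h⟩))
  · -- clause 2
    have hp1 : p i.succ < 0 := lt_of_le_of_lt (by rw [hb _]; exact le_max_left _ _) hB1
    have hq1 : q i.succ < 0 := lt_of_le_of_lt (by rw [hb _]; exact le_max_right _ _) hB1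
    rw [hb _] at hB0
    rcases lt_max_iff.mp hB0 with h | h
    · exact Or.inl (Or.inr (Or.inl ⟨hp1, h⟩))
    · exact Or.inr (Or.inl (Or.inr (Or.inl ⟨hq1, h⟩)))
  · -- clause 3
    rw [hb _] at hB0
    rcases max_choice (p i.castSucc) (q i.castSucc) with h | h <;> rw [h] at hB0
    · exact Or.inl (Or.inr (Or.inr (Or.inl ⟨hi0, hB0⟩)))
    · exact Or.inr (Or.inl (Or.inr (Or.inr (Or.inl ⟨hi0, hB0⟩))))
  · -- clause 4
    have := hb i.castSucc; rw [hB0] at this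
    rcases max_choice (p i.castSucc) (q i.castSucc) with h | h
    · exact case4_aux p q b hb i hip hB0 hBp (by rw [← h, ← this])
    · rcases case4_aux q p b hb' i hip hB0 hBp (by rw [← h, ← this]) with h' | h' | ⟨ha, hc, hd⟩
      · exact Or.inr (Or.inl h')
      · exact Or.inl h'
      · exact Or.inr (Or.inr ⟨ha, hc, hd.symm⟩)
  · -- clause 5
    have := hb i.succ; rw [hB1] at this
    rcases max_choice (p i.succ) (q i.succ) with h | h
    · rcases case5_aux p q b hb i hin hB0 hB1 (by rw [← h, ← this]) with h' | h'
      · exact Or.inl h'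
      · exact Or.inr (Or.inl h')
    · rcases case5_aux q p b hb' i hin hB0 hB1 (by rw [← h, ← this]) with h' | h'
      · exact Or.inr (Or.inl h')
      · exact Or.inl h'

/-- Counting: crossings of `max p q` are at most crossings of `p` plus crossings of `q`. -/
lemma ncard_cross_max {n : ℕ} (p q b : Fin (n + 1) → ℝ) (hb : ∀ j, b j = max (p j) (q j)) :
    {i : Fin n | crossB b i}.ncard ≤ {i : Fin n | crossB p i}.ncard + {i : Fin n | crossB q i}.ncard := by
  classical
  set P : Set (Fin n) := {i | crossB p i}
  set Q : Set (Fin n) := {i | crossB q i}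
  set T : Set (Fin n ⊕ Fin n) := Sum.inl '' P ∪ Sum.inr '' Q with hT
  have hTcard : T.ncard = P.ncard + Q.ncard := by
    rw [Set.ncard_union_eq (by
        rw [Set.disjoint_left]; rintro a ⟨x, _, rfl⟩ ⟨y, _, h⟩; exact nomatch h)
      ((P.toFinite).image _) ((Q.toFinite).image _),
      Set.ncard_image_of_injective _ Sum.inl_injective,
      Set.ncard_image_of_injective _ Sum.inr_injective]
  set Φ : Fin n → Fin n ⊕ Fin n := fun i =>
    if crossB p i then Sum.inl i else if crossB q i then Sum.inr i
    else if crossB p (pvi i) then Sum.inl (pvi i) else Sum.inr (pvi i) with hΦ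
  have key : ∀ i ∈ {i : Fin n | crossB b i}, (¬ crossB p i ∧ ¬ crossB q i) →
      0 < (i : ℕ) ∧ ¬ crossB b (pvi i) ∧ (crossB p (pvi i) ∨ crossB q (pvi i)) := by
    intro i hi ⟨h1, h2⟩
    rcases crossB_max_claim p q b hb i hi with h | h | h
    · exact absurd h h1
    · exact absurd h h2
    · exact h
  have hmaps : ∀ i ∈ {i : Fin n | crossB b i}, Φ i ∈ T := by
    intro i hi
    simp only [hΦ]
    by_cases h1 : crossB p i
    · simp [h1]; exact Or.inl ⟨i, h1, rfl⟩
    by_cases h2 : crossB q i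
    · simp [h1, h2]; exact Or.inr ⟨i, h2, rfl⟩
    obtain ⟨_, _, hpq⟩ := key i hi ⟨h1, h2⟩
    by_cases h3 : crossB p (pvi i)
    · simp [h1, h2, h3]; exact Or.inl ⟨pvi i, h3, rfl⟩
    · simp [h1, h2, h3]
      rcases hpq with h | h
      · exact absurd h h3
      · exact Or.inr ⟨pvi i, h, rfl⟩
  have hinj : Set.InjOn Φ {i : Fin n | crossB b i} := by
    intro i hi j hj hij
    simp only [hΦ] at hij
    by_cases hpi : crossB p i <;> by_cases hqi : crossB q i <;>
      by_cases hpj : crossB p j <;> by_cases hqj : crossB q j <;>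
      simp only [hpi, hqi, hpj, hqj, if_true, if_false] at hij <;>
      first
        | (exact Sum.inl_injective hij)
        | (exact Sum.inr_injective hij)
        | (exact absurd hij (by simp))
        | skip
    · -- i normal inl, j exceptional
      by_cases h3 : crossB p (pvi j) <;> simp only [h3, if_true, if_false] at hij
      · have := Sum.inl_injective hij
        obtain ⟨_, hnc, _⟩ := key j hj ⟨hpj, hqj⟩
        rw [← this] at hnc; exact absurd hi hnc
      · exact nomatch hij
    · by_cases h3 : crossB p (pvi j) <;> simp only [h3, if_true, if_false] at hij
      · have := Sum.inl_injective hij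
        obtain ⟨_, hnc, _⟩ := key j hj ⟨hpj, hqj⟩
        rw [← this] at hnc; exact absurd hi hnc
      · exact nomatch hij
    · -- i normal inr, j exceptional
      by_cases h3 : crossB p (pvi j) <;> simp only [h3, if_true, if_false] at hij
      · exact nomatch hij
      · have := Sum.inr_injective hij
        obtain ⟨_, hnc, _⟩ := key j hj ⟨hpj, hqj⟩
        rw [← this] at hnc; exact absurd hi hnc
    · -- i exceptional, j normal inl
      by_cases h3 : crossB p (pvi i) <;> simp only [h3, if_true, if_false] at hij
      · have := Sum.inl_injective hij
        obtain ⟨_, hnc, _⟩ := key i hi ⟨hpi, hqi⟩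
        rw [this] at hnc; exact absurd hj hnc
      · exact nomatch hij
    · by_cases h3 : crossB p (pvi i) <;> simp only [h3, if_true, if_false] at hij
      · have := Sum.inl_injective hij
        obtain ⟨_, hnc, _⟩ := key i hi ⟨hpi, hqi⟩
        rw [this] at hnc; exact absurd hj hnc
      · exact nomatch hij
    · -- i exceptional, j normal inr
      by_cases h3 : crossB p (pvi i) <;> simp only [h3, if_true, if_false] at hij
      · exact nomatch hij
      · have := Sum.inr_injective hij
        obtain ⟨_, hnc, _⟩ := key i hi ⟨hpi, hqi⟩
        rw [this] at hnc; exact absurd hj hnc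
    · -- both exceptional
      obtain ⟨hip, _, _⟩ := key i hi ⟨hpi, hqi⟩
      obtain ⟨hjp, _, _⟩ := key j hj ⟨hpj, hqj⟩
      have : pvi i = pvi j := by
        by_cases h3 : crossB p (pvi i) <;> by_cases h4 : crossB p (pvi j) <;>
          simp only [h3, h4, if_true, if_false] at hij
        · exact Sum.inl_injective hij
        · exact nomatch hij
        · exact nomatch hij
        · exact Sum.inr_injective hij
      have : (i : ℕ) - 1 = (j : ℕ) - 1 := congrArg Fin.val this
      ext; omega
  calc {i : Fin n | crossB b i}.ncard ≤ T.ncard :=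
        Set.ncard_le_ncard_of_injOn Φ hmaps hinj (T.toFinite)
    _ = P.ncard + Q.ncard := hTcard

lemma cross_set_neg {n : ℕ} (b : Fin (n + 1) → ℝ) :
    {i : Fin n | crossB (fun j => -(b j)) i} = {i : Fin n | crossB b i} := by
  ext i; exact crossB_neg b i

lemma ncard_cross_min {n : ℕ} (p q b : Fin (n + 1) → ℝ) (hb : ∀ j, b j = min (p j) (q j)) :
    {i : Fin n | crossB b i}.ncard ≤ {i : Fin n | crossB p i}.ncard + {i : Fin n | crossB q i}.ncard := by
  have h1 : ∀ j, -(b j) = max (-(p j)) (-(q j)) := by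
    intro j; rw [hb j, max_neg_neg]
  calc {i : Fin n | crossB b i}.ncard
      = {i : Fin n | crossB (fun j => -(b j)) i}.ncard := by rw [cross_set_neg]
    _ ≤ {i : Fin n | crossB (fun j => -(p j)) i}.ncard
        + {i : Fin n | crossB (fun j => -(q j)) i}.ncard :=
        ncard_cross_max _ _ _ h1
    _ = {i : Fin n | crossB p i}.ncard + {i : Fin n | crossB q i}.ncard := by
        rw [cross_set_neg, cross_set_neg]

/-- An affine functional vanishing on the line `{f = c}` is a multiple of `f - c`. -/
lemma affine_vanish {f : ℝ × ℝ →ₗ[ℝ] ℝ} (hf : f ≠ 0) (c : ℝ) (u : (ℝ × ℝ) →ᵃ[ℝ] ℝ)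
    (h : ∀ p, f p = c → u p = 0) : ∃ lam : ℝ, ∀ p, u p = lam * (f p - c) := by
  obtain ⟨v, hv⟩ : ∃ v, f v ≠ 0 := by
    by_contra hcon
    push_neg at hcon
    exact hf (LinearMap.ext fun v => hcon v)
  set w : ℝ × ℝ := (f v)⁻¹ • v with hw
  have hfw : f w = 1 := by rw [hw, map_smul, smul_eq_mul, inv_mul_cancel₀ hv]
  set p₀ : ℝ × ℝ := c • w with hp₀
  have hfp₀ : f p₀ = c := by rw [hp₀, map_smul, hfw, smul_eq_mul, mul_one]
  refine ⟨u.linear w, fun p => ?_⟩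
  set k : ℝ × ℝ := p - p₀ - (f p - c) • w with hk
  have hfk : f k = 0 := by
    rw [hk]; simp only [map_sub, map_smul, hfw, hfp₀, smul_eq_mul, mul_one]; ring
  have hulk : u.linear k = 0 := by
    have h1 : u (k +ᵥ p₀) = u.linear k +ᵥ u p₀ := u.map_vadd p₀ k
    have h2 : u (k +ᵥ p₀) = 0 := h _ (by
      show f (k + p₀) = c
      rw [map_add, hfk, hfp₀, zero_add])
    have h3 : u p₀ = 0 := h _ hfp₀
    rw [h2, h3] at h1
    simpa using h1.symm
  have hdec : p = (p - p₀) +ᵥ p₀ := by simp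
  calc u p = u ((p - p₀) +ᵥ p₀) := by rw [← hdec]
    _ = u.linear (p - p₀) +ᵥ u p₀ := u.map_vadd p₀ (p - p₀)
    _ = u.linear ((f p - c) • w + k) + u p₀ := by
        congr 2
        rw [hk]; ring
    _ = (f p - c) * u.linear w + u.linear k + u p₀ := by
        rw [map_add, map_smul, smul_eq_mul]
    _ = u.linear w * (f p - c) := by rw [hulk, h _ hfp₀]; ring

/-- If an injective map agrees with an affine map on a closed half-plane, that affine map
has injective linear part. -/
lemma halfplane_linear_injective {α : ℝ × ℝ → ℝ × ℝ} (hinj : Function.Injective α)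
    {f : ℝ × ℝ →ₗ[ℝ] ℝ} (hf : f ≠ 0) {c : ℝ} {α₁ : (ℝ × ℝ) →ᵃ[ℝ] (ℝ × ℝ)}
    (hagree : ∀ p, f p ≤ c → α p = α₁ p) : Function.Injective α₁.linear := by
  obtain ⟨v0, hv0⟩ : ∃ v, f v ≠ 0 := by
    by_contra hcon; push_neg at hcon; exact hf (LinearMap.ext fun v => hcon v)
  set w : ℝ × ℝ := (f v0)⁻¹ • v0 with hw
  have hfw : f w = 1 := by rw [hw, map_smul, smul_eq_mul, inv_mul_cancel₀ hv0]
  rw [← LinearMap.ker_eq_bot, LinearMap.ker_eq_bot']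
  intro v hv
  by_contra hvne
  set p : ℝ × ℝ := (c - 1 - |f v|) • w with hp
  have hfp : f p ≤ c := by
    rw [hp, map_smul, hfw, smul_eq_mul, mul_one]
    have := abs_nonneg (f v); linarith
  have hfpv : f (p + v) ≤ c := by
    rw [map_add, hp, map_smul, hfw, smul_eq_mul, mul_one]
    have := le_abs_self (f v); linarith
  have h1 : α p = α₁ p := hagree p hfp
  have h2 : α (p + v) = α₁ (p + v) := hagree _ hfpv
  have h3 : α₁ (p + v) = α₁ p := by
    have h := α₁.map_vadd p v
    rw [show v +ᵥ p = p + v by simp [add_comm]] at h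
    simpa [hv] using h
  have : α (p + v) = α p := by rw [h2, h3, h1]
  have := hinj this
  exact hvne (by
    have h4 : p + v = p := this
    have := congrArg (fun z => z - p) h4
    simpa using this)

lemma comp_linear_ne_zero {g : ℝ × ℝ →ₗ[ℝ] ℝ} (hg : g ≠ 0) {L : ℝ × ℝ →ₗ[ℝ] ℝ × ℝ}
    (hL : Function.Injective L) : g ∘ₗ L ≠ 0 := by
  obtain ⟨y, hy⟩ : ∃ y, g y ≠ 0 := by
    by_contra hcon; push_neg at hcon; exact hg (LinearMap.ext fun v => hcon v)
  have hsurj : Function.Surjective L := LinearMap.injective_iff_surjective.mp hL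
  obtain ⟨z, rfl⟩ := hsurj y
  intro hzero
  exact hy (by simpa using congrArg (fun (m : ℝ × ℝ →ₗ[ℝ] ℝ) => m z) hzero)

lemma vfOn_eq_ncard {n : ℕ} (x : Fin (n + 1) → ℝ × ℝ) (g : ℝ × ℝ →ₗ[ℝ] ℝ) (c : ℝ) :
    vfOn x g c = {i : Fin n | crossB (fun j => g (x j) - c) i}.ncard := by
  unfold vfOn
  congr 1
  ext i
  exact isCrossing_iff_crossB x g c i

lemma vfOn_le {n : ℕ} (x : Fin (n + 1) → ℝ × ℝ) (g : ℝ × ℝ →ₗ[ℝ] ℝ) (c : ℝ) :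
    vfOn x g c ≤ n := by
  unfold vfOn
  calc {i : Fin n | IsCrossing x g c i}.ncard ≤ (Set.univ : Set (Fin n)).ncard :=
        Set.ncard_le_ncard (Set.subset_univ _) Set.finite_univ
    _ = n := by rw [Set.ncard_univ, Nat.card_eq_fintype_card, Fintype.card_fin]

lemma vf_bddAbove {n : ℕ} (x : Fin (n + 1) → ℝ × ℝ) :
    BddAbove {k : ℕ | ∃ (g : ℝ × ℝ →ₗ[ℝ] ℝ) (c : ℝ), g ≠ 0 ∧ k = vfOn x g c} := by
  refine ⟨n, ?_⟩
  rintro k ⟨g, c, _, rfl⟩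
  exact vfOn_le x g c

lemma fst_ne_zero : (LinearMap.fst ℝ ℝ ℝ) ≠ 0 := by
  intro h
  have := congrArg (fun (m : ℝ × ℝ →ₗ[ℝ] ℝ) => m (1, 0)) h
  simpa using this

lemma vf_set_nonempty {n : ℕ} (x : Fin (n + 1) → ℝ × ℝ) :
    {k : ℕ | ∃ (g : ℝ × ℝ →ₗ[ℝ] ℝ) (c : ℝ), g ≠ 0 ∧ k = vfOn x g c}.Nonempty :=
  ⟨vfOn x (LinearMap.fst ℝ ℝ ℝ) 0, LinearMap.fst ℝ ℝ ℝ, 0, fst_ne_zero, rfl⟩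

lemma vfOn_le_vf {n : ℕ} (x : Fin (n + 1) → ℝ × ℝ) {g : ℝ × ℝ →ₗ[ℝ] ℝ} (hg : g ≠ 0) (c : ℝ) :
    vfOn x g c ≤ vf x :=
  le_csSup (vf_bddAbove x) ⟨g, c, hg, rfl⟩

/-- Key geometric lemma: applying a half-plane-affine map to a list at most doubles `vf`. -/
lemma vf_comp_le {α : ℝ × ℝ → ℝ × ℝ} (hα : IsHalfPlaneAffine α) {n : ℕ}
    (x : Fin (n + 1) → ℝ × ℝ) : vf (fun j => α (x j)) ≤ 2 * vf x := by
  obtain ⟨⟨hinj, _⟩, f, c, hf, α₁, α₂, hA1, hA2⟩ := hα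
  apply csSup_le (vf_set_nonempty _)
  rintro k ⟨g, d, hg, rfl⟩
  -- the two pulled-back lines
  set h₁ : ℝ × ℝ →ₗ[ℝ] ℝ := g ∘ₗ α₁.linear with hh₁
  set h₂ : ℝ × ℝ →ₗ[ℝ] ℝ := g ∘ₗ α₂.linear with hh₂
  have hinj1 : Function.Injective α₁.linear := halfplane_linear_injective hinj hf hA1
  have hinj2 : Function.Injective α₂.linear := by
    refine halfplane_linear_injective hinj (f := -f) (neg_ne_zero.mpr hf) (c := -c) ?_
    intro p hp
    exact hA2 p (by simpa using neg_le_neg hp)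
  have hh1ne : h₁ ≠ 0 := comp_linear_ne_zero hg hinj1
  have hh2ne : h₂ ≠ 0 := comp_linear_ne_zero hg hinj2
  set d₁ : ℝ := d - g (α₁ 0) with hd₁
  set d₂ : ℝ := d - g (α₂ 0) with hd₂
  set b : Fin (n + 1) → ℝ := fun j => g (α (x j)) - d with hb
  set p : Fin (n + 1) → ℝ := fun j => g (α₁ (x j)) - d with hp
  set q : Fin (n + 1) → ℝ := fun j => g (α₂ (x j)) - d with hq
  have hpval : (fun j => h₁ (x j) - d₁) = p := by
    funext j
    have : α₁ (x j) = α₁.linear (x j) + α₁ 0 := by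
      have h := α₁.map_vadd 0 (x j)
      simpa using h
    simp only [hp, hh₁, hd₁, this, LinearMap.coe_comp, Function.comp_apply, map_add]
    ring
  have hqval : (fun j => h₂ (x j) - d₂) = q := by
    funext j
    have : α₂ (x j) = α₂.linear (x j) + α₂ 0 := by
      have h := α₂.map_vadd 0 (x j)
      simpa using h
    simp only [hq, hh₂, hd₂, this, LinearMap.coe_comp, Function.comp_apply, map_add]
    ring
  -- the affine functional u = g∘α₂ - g∘α₁ vanishes on {f = c}
  set u : (ℝ × ℝ) →ᵃ[ℝ] ℝ := (g.toAffineMap.comp α₂) - (g.toAffineMap.comp α₁) with hu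
  have huval : ∀ z, u z = g (α₂ z) - g (α₁ z) := fun z => rfl
  obtain ⟨lam, hlam⟩ : ∃ lam : ℝ, ∀ z, u z = lam * (f z - c) := by
    apply affine_vanish hf c
    intro z hz
    rw [huval, ← hA1 z hz.le, ← hA2 z hz.ge, sub_self]
  have hbp : ∀ j, f (x j) ≤ c → b j = p j := by
    intro j hj; simp only [hb, hp, hA1 (x j) hj]
  have hbq : ∀ j, c ≤ f (x j) → b j = q j := by
    intro j hj; simp only [hb, hq, hA2 (x j) hj]
  have hqp : ∀ j, q j - p j = lam * (f (x j) - c) := by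
    intro j
    have := hlam (x j)
    rw [huval] at this
    simp only [hp, hq]
    linarith
  have hcount : {i : Fin n | crossB b i}.ncard ≤
      {i : Fin n | crossB p i}.ncard + {i : Fin n | crossB q i}.ncard := by
    rcases le_total 0 lam with hl | hl
    · refine ncard_cross_max p q b ?_
      intro j
      rcases le_total (f (x j)) c with hj | hj
      · rw [hbp j hj]
        have : q j ≤ p j := by
          have h1 : lam * (f (x j) - c) ≤ 0 := mul_nonpos_of_nonneg_of_nonpos hl (by linarith)
          have := hqp j; linarith
        exact (max_eq_left this).symm
      · rw [hbq j hj]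
        have : p j ≤ q j := by
          have h1 : 0 ≤ lam * (f (x j) - c) := mul_nonneg hl (by linarith)
          have := hqp j; linarith
        exact (max_eq_right this).symm
    · refine ncard_cross_min p q b ?_
      intro j
      rcases le_total (f (x j)) c with hj | hj
      · rw [hbp j hj]
        have : p j ≤ q j := by
          have h1 : 0 ≤ lam * (f (x j) - c) := by
            have : (0:ℝ) ≤ (-lam) * (c - f (x j)) := mul_nonneg (by linarith) (by linarith)
            nlinarith
          have := hqp j; linarith
        exact (min_eq_left this).symm
      · rw [hbq j hj]
        have : q j ≤ p j := by
          have h1 : lam * (f (x j) - c) ≤ 0 := mul_nonpos_of_nonpos_of_nonneg hl (by linarith)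
          have := hqp j; linarith
        exact (min_eq_right this).symm
  calc vfOn (fun j => α (x j)) g d = {i : Fin n | crossB b i}.ncard := vfOn_eq_ncard _ g d
    _ ≤ {i : Fin n | crossB p i}.ncard + {i : Fin n | crossB q i}.ncard := hcount
    _ = vfOn x h₁ d₁ + vfOn x h₂ d₂ := by
        rw [vfOn_eq_ncard x h₁ d₁, vfOn_eq_ncard x h₂ d₂, hpval, hqval]
    _ ≤ vf x + vf x := Nat.add_le_add (vfOn_le_vf x hh1ne d₁) (vfOn_le_vf x hh2ne d₂)
    _ = 2 * vf x := (two_mul _).symm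

lemma exists_fone {f : ℝ × ℝ →ₗ[ℝ] ℝ} (hf : f ≠ 0) : ∃ w, f w = 1 := by
  obtain ⟨v, hv⟩ : ∃ v, f v ≠ 0 := by
    by_contra hcon; push_neg at hcon; exact hf (LinearMap.ext fun v => hcon v)
  exact ⟨(f v)⁻¹ • v, by rw [map_smul, smul_eq_mul, inv_mul_cancel₀ hv]⟩

lemma affine_decomp (A : (ℝ × ℝ) →ᵃ[ℝ] (ℝ × ℝ)) (z : ℝ × ℝ) : A z = A.linear z + A 0 := by
  have h := A.map_vadd 0 z
  simpa using h

lemma affine_decomp' (A : (ℝ × ℝ) →ᵃ[ℝ] ℝ) (z : ℝ × ℝ) : A z = A.linear z + A 0 := by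
  have h := A.map_vadd 0 z
  simpa using h

lemma isHalfPlaneAffine_symm (α : (ℝ × ℝ) ≃ (ℝ × ℝ)) (hα : IsHalfPlaneAffine ⇑α) :
    IsHalfPlaneAffine ⇑α.symm := by
  obtain ⟨⟨hinj, hsurj⟩, f, c, hf, α₁, α₂, hA1, hA2⟩ := hα
  have hinj1 : Function.Injective α₁.linear := halfplane_linear_injective hinj hf hA1
  have hinj2 : Function.Injective α₂.linear := by
    refine halfplane_linear_injective hinj (f := -f) (neg_ne_zero.mpr hf) (c := -c) ?_
    intro p hp
    exact hA2 p (by simpa using neg_le_neg hp)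
  have hbij1 : Function.Bijective α₁.linear :=
    ⟨hinj1, LinearMap.injective_iff_surjective.mp hinj1⟩
  have hbij2 : Function.Bijective α₂.linear :=
    ⟨hinj2, LinearMap.injective_iff_surjective.mp hinj2⟩
  set e₁ := LinearEquiv.ofBijective α₁.linear hbij1 with he₁
  set e₂ := LinearEquiv.ofBijective α₂.linear hbij2 with he₂
  set β₁ : (ℝ × ℝ) →ᵃ[ℝ] (ℝ × ℝ) :=
    { toFun := fun y => e₁.symm (y - α₁ 0)
      linear := (e₁.symm : (ℝ × ℝ) →ₗ[ℝ] (ℝ × ℝ))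
      map_vadd' := by
        intro pt v
        show e₁.symm (v + pt - α₁ 0) = e₁.symm v + e₁.symm (pt - α₁ 0)
        rw [← map_add]; congr 1; abel } with hβ₁
  set β₂ : (ℝ × ℝ) →ᵃ[ℝ] (ℝ × ℝ) :=
    { toFun := fun y => e₂.symm (y - α₂ 0)
      linear := (e₂.symm : (ℝ × ℝ) →ₗ[ℝ] (ℝ × ℝ))
      map_vadd' := by
        intro pt v
        show e₂.symm (v + pt - α₂ 0) = e₂.symm v + e₂.symm (pt - α₂ 0)
        rw [← map_add]; congr 1; abel } with hβ₂
  have hβ₁app : ∀ y, β₁ y = e₁.symm (y - α₁ 0) := fun y => rfl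
  have hβ₂app : ∀ y, β₂ y = e₂.symm (y - α₂ 0) := fun y => rfl
  have hba1 : ∀ z, β₁ (α₁ z) = z := by
    intro z
    rw [hβ₁app, affine_decomp α₁ z]
    have : α₁.linear z + α₁ 0 - α₁ 0 = e₁ z := by simp [he₁, LinearEquiv.ofBijective_apply]
    rw [this, LinearEquiv.symm_apply_apply]
  have hba2 : ∀ z, β₂ (α₂ z) = z := by
    intro z
    rw [hβ₂app, affine_decomp α₂ z]
    have : α₂.linear z + α₂ 0 - α₂ 0 = e₂ z := by simp [he₂, LinearEquiv.ofBijective_apply]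
    rw [this, LinearEquiv.symm_apply_apply]
  have hab1 : ∀ y, α₁ (β₁ y) = y := by
    intro y
    rw [hβ₁app, affine_decomp α₁]
    have : α₁.linear (e₁.symm (y - α₁ 0)) = y - α₁ 0 := by
      have := e₁.apply_symm_apply (y - α₁ 0)
      rwa [LinearEquiv.ofBijective_apply] at this
    rw [this]; abel
  have hab2 : ∀ y, α₂ (β₂ y) = y := by
    intro y
    rw [hβ₂app, affine_decomp α₂]
    have : α₂.linear (e₂.symm (y - α₂ 0)) = y - α₂ 0 := by
      have := e₂.apply_symm_apply (y - α₂ 0)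
      rwa [LinearEquiv.ofBijective_apply] at this
    rw [this]; abel
  -- the functional for the inverse splitting
  set f' : ℝ × ℝ →ₗ[ℝ] ℝ := f ∘ₗ (e₁.symm : (ℝ × ℝ) →ₗ[ℝ] (ℝ × ℝ)) with hf'def
  have hf' : f' ≠ 0 := comp_linear_ne_zero hf e₁.symm.injective
  set c' : ℝ := c + f (e₁.symm (α₁ 0)) with hc'def
  have hkey : ∀ y, f (β₁ y) - c = f' y - c' := by
    intro y
    rw [hβ₁app]
    have : (y - α₁ 0) = y + (-(α₁ 0)) := by abel
    rw [this, map_add, map_add]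
    simp only [hf'def, hc'def, LinearMap.coe_comp, Function.comp_apply, map_neg,
      LinearEquiv.coe_coe]
    ring
  -- μ : f (β₂ y) - c = μ * (f (β₁ y) - c)
  obtain ⟨μ, hμ⟩ : ∃ μ : ℝ, ∀ y, f (β₂ y) - c = μ * (f (β₁ y) - c) := by
    have := affine_vanish hf' c'
      ((f.toAffineMap.comp β₂) - AffineMap.const ℝ (ℝ × ℝ) c) ?_
    · obtain ⟨lam, hlam⟩ := this
      refine ⟨lam, fun y => ?_⟩
      have h1 := hlam y
      have h2 : ((f.toAffineMap.comp β₂) - AffineMap.const ℝ (ℝ × ℝ) c) y = f (β₂ y) - c := rfl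
      rw [h2] at h1
      rw [h1, hkey y]
    · intro y hy
      have hfb1 : f (β₁ y) = c := by have := hkey y; rw [hy] at this; linarith
      have h1 : α (β₁ y) = α₁ (β₁ y) := hA1 _ hfb1.le
      have h2 : α (β₁ y) = α₂ (β₁ y) := hA2 _ hfb1.ge
      have h3 : α₂ (β₁ y) = y := by rw [← h2, h1, hab1]
      have h4 : β₂ y = β₁ y := by
        have h5 := congrArg β₂ h3
        rw [hba2] at h5
        exact h5.symm
      show f (β₂ y) - c = 0
      rw [h4, hfb1, sub_self]
  obtain ⟨w, hw⟩ := exists_fone hf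
  have hμpos : 0 < μ := by
    have hne : μ ≠ 0 := by
      intro h0
      have hy := hμ (α₂ ((c + 1) • w))
      rw [hba2, h0, zero_mul] at hy
      rw [map_smul, hw, smul_eq_mul, mul_one] at hy
      linarith
    rcases lt_trichotomy μ 0 with hlt | h0 | hgt
    · exfalso
      set y := α₁ ((c - 1) • w) with hy
      have hb1 : f (β₁ y) - c = -1 := by
        rw [hy, hba1, map_smul, hw, smul_eq_mul, mul_one]; ring
      have hb2 : f (β₂ y) - c = -μ := by rw [hμ, hb1]; ring
      have hc2 : c ≤ f (β₂ y) := by linarith [neg_pos.mpr hlt]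
      have hc1 : f (β₁ y) ≤ c := by linarith
      have g1 : α (β₁ y) = y := by rw [hA1 _ hc1, hab1]
      have g2 : α (β₂ y) = y := by rw [hA2 _ hc2, hab2]
      have : β₂ y = β₁ y := hinj (g2.trans g1.symm)
      rw [this, hb1] at hb2
      linarith [neg_pos.mpr hlt]
    · exact absurd h0 hne
    · exact hgt
  refine ⟨α.symm.bijective, f', c', hf', β₁, β₂, ?_, ?_⟩
  · intro y hy
    have h1 : f (β₁ y) ≤ c := by have := hkey y; linarith
    have : α (β₁ y) = y := by rw [hA1 _ h1, hab1]
    rw [Equiv.symm_apply_eq]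
    exact this.symm
  · intro y hy
    have h1 : 0 ≤ f (β₁ y) - c := by have := hkey y; linarith
    have h2 : c ≤ f (β₂ y) := by
      have h3 := hμ y
      have h4 : 0 ≤ μ * (f (β₁ y) - c) := mul_nonneg hμpos.le h1
      linarith
    have : α (β₂ y) = y := by rw [hA2 _ h2, hab2]
    rw [Equiv.symm_apply_eq]
    exact this.symm

lemma vf_pos {n : ℕ} (hn : 0 < n) (x : Fin (n + 1) → ℝ × ℝ) : 1 ≤ vf x := by
  set i0 : Fin n := ⟨0, hn⟩ with hi0
  have hcross : IsCrossing x (LinearMap.fst ℝ ℝ ℝ) ((x 0).1) i0 := by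
    refine Or.inr (Or.inr (Or.inl ⟨rfl, ?_⟩))
    have : i0.castSucc = 0 := by ext; simp [hi0]
    rw [this]
    rfl
  have h1 : 1 ≤ vfOn x (LinearMap.fst ℝ ℝ ℝ) ((x 0).1) := by
    have : 0 < vfOn x (LinearMap.fst ℝ ℝ ℝ) ((x 0).1) := by
      unfold vfOn
      rw [Set.ncard_pos (Set.toFinite _)]
      exact ⟨i0, hcross⟩
    omega
  exact h1.trans (vfOn_le_vf x fst_ne_zero _)

lemma zero_mem_varSet (f : ℝ × ℝ → ℂ) {σ : Set (ℝ × ℝ)} (hne : σ.Nonempty) :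
    (0 : ℝ) ∈ varSet f σ := by
  obtain ⟨z, hz⟩ := hne
  refine ⟨0, fun _ => z, fun _ => hz, ?_⟩
  have : cvar f (fun _ : Fin 1 => z) = 0 := by
    unfold cvar
    simp
  rw [this, zero_div]

/-- main transfer bound for variation quotients -/
lemma varSet_transfer (β : (ℝ × ℝ) ≃ (ℝ × ℝ)) (hβs : IsHalfPlaneAffine ⇑β.symm)
    (σ : Set (ℝ × ℝ)) (f : ℝ × ℝ → ℂ) (M : ℝ) (hM : 0 ≤ M)
    (h : ∀ r ∈ varSet f σ, r ≤ M) :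
    ∀ r ∈ varSet (fun q => f (β.symm q)) (⇑β '' σ), r ≤ 2 * M := by
  rintro r ⟨n, y, hy, rfl⟩
  set x : Fin (n + 1) → ℝ × ℝ := fun j => β.symm (y j) with hx
  have hxσ : ∀ i, x i ∈ σ := by
    intro i
    obtain ⟨z, hzσ, hz⟩ := hy i
    have : x i = z := by rw [hx]; simp [← hz]
    rwa [this]
  have hcvar : cvar (fun q => f (β.symm q)) y = cvar f x := rfl
  have hvf : vf x ≤ 2 * vf y := vf_comp_le hβs y
  rcases Nat.eq_zero_or_pos n with hn | hn
  · subst hn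
    have : cvar (fun q => f (β.symm q)) y = 0 := by
      unfold cvar; simp
    rw [this, zero_div]
    linarith
  · have hvfy : (1 : ℕ) ≤ vf y := vf_pos hn y
    have hvfx : (1 : ℕ) ≤ vf x := vf_pos hn x
    have hmem : cvar f x / (vf x : ℝ) ∈ varSet f σ := ⟨n, x, hxσ, rfl⟩
    have hle : cvar f x / (vf x : ℝ) ≤ M := h _ hmem
    have hvfxpos : (0 : ℝ) < (vf x : ℝ) := by exact_mod_cast hvfx
    have hvfypos : (0 : ℝ) < (vf y : ℝ) := by exact_mod_cast hvfy
    have hcle : cvar f x ≤ M * (vf x : ℝ) := (div_le_iff₀ hvfxpos).mp hle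
    rw [hcvar, div_le_iff₀ hvfypos]
    have hcast : (vf x : ℝ) ≤ 2 * (vf y : ℝ) := by exact_mod_cast hvf
    calc cvar f x ≤ M * (vf x : ℝ) := hcle
      _ ≤ M * (2 * (vf y : ℝ)) := mul_le_mul_of_nonneg_left hcast hM
      _ = 2 * M * (vf y : ℝ) := by ring

lemma norm_image_transfer (β : (ℝ × ℝ) ≃ (ℝ × ℝ)) (σ : Set (ℝ × ℝ)) (f : ℝ × ℝ → ℂ) :
    (fun z => ‖(fun q => f (β.symm q)) z‖) '' (⇑β '' σ) = (fun z => ‖f z‖) '' σ := by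
  rw [Set.image_image]
  simp

lemma memBV_forward (β : (ℝ × ℝ) ≃ (ℝ × ℝ)) (hβs : IsHalfPlaneAffine ⇑β.symm)
    (σ : Set (ℝ × ℝ)) (f : ℝ × ℝ → ℂ) (h : MemBV f σ) :
    MemBV (fun q => f (β.symm q)) (⇑β '' σ) := by
  obtain ⟨h1, h2⟩ := h
  constructor
  · rw [norm_image_transfer]
    exact h1
  · obtain ⟨M, hM⟩ := h2
    rw [mem_upperBounds] at hM
    refine ⟨2 * max M 0, ?_⟩
    rw [mem_upperBounds]
    exact varSet_transfer β hβs σ f (max M 0) (le_max_right _ _)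
      (fun r hr => (hM r hr).trans (le_max_left _ _))

/-- For a half-plane-affine map `α` and nonempty compact `σ₁ ⊆ ℝ²` with `σ₂ = α(σ₁)`, the
map `f ↦ f ∘ α⁻¹` is a bounded algebra isomorphism from `BV(σ₁)` onto `BV(σ₂)`: it respects
the algebra operations, `f ∈ BV(σ₁)` iff `f ∘ α⁻¹ ∈ BV(σ₂)` (so it is a bijection onto
`BV(σ₂)`), and `‖f ∘ α⁻¹‖_{BV(σ₂)} ≤ 2 ‖f‖_{BV(σ₁)}`. -/
theorem stmt14 (σ₁ : Set (ℝ × ℝ)) (hσ : IsCompact σ₁) (hne : σ₁.Nonempty)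
    (α : (ℝ × ℝ) ≃ (ℝ × ℝ)) (hα : IsHalfPlaneAffine ⇑α) :
    (∀ f g : ℝ × ℝ → ℂ,
        (fun q => (f + g) (α.symm q)) = (fun q => f (α.symm q)) + (fun q => g (α.symm q)) ∧
        (fun q => (f * g) (α.symm q)) = (fun q => f (α.symm q)) * (fun q => g (α.symm q))) ∧
    (∀ f : ℝ × ℝ → ℂ, MemBV f σ₁ ↔ MemBV (fun q => f (α.symm q)) (⇑α '' σ₁)) ∧
    (∀ f : ℝ × ℝ → ℂ, MemBV f σ₁ →
        bvNorm (fun q => f (α.symm q)) (⇑α '' σ₁) ≤ 2 * bvNorm f σ₁) := by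
  have hαs : IsHalfPlaneAffine ⇑α.symm := isHalfPlaneAffine_symm α hα
  refine ⟨fun f g => ⟨rfl, rfl⟩, fun f => ⟨fun h => memBV_forward α hαs σ₁ f h, ?_⟩, ?_⟩
  · intro h
    have hααs : IsHalfPlaneAffine ⇑α.symm.symm := by rw [Equiv.symm_symm]; exact hα
    have h2 := memBV_forward α.symm hααs (⇑α '' σ₁) (fun q => f (α.symm q)) h
    have e1 : (fun q => (fun q' => f (α.symm q')) (α.symm.symm q)) = f := by
      funext q; simp
    have e2 : ⇑α.symm '' (⇑α '' σ₁) = σ₁ := by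
      rw [Equiv.symm_image_image]
    rwa [e1, e2] at h2
  · intro f hf
    have hσ₂ne : (⇑α '' σ₁).Nonempty := hne.image _
    have hN : sSup ((fun z => ‖(fun q => f (α.symm q)) z‖) '' (⇑α '' σ₁)) =
        sSup ((fun z => ‖f z‖) '' σ₁) := by rw [norm_image_transfer]
    have hNnn : 0 ≤ sSup ((fun z => ‖f z‖) '' σ₁) := by
      obtain ⟨z, hz⟩ := hne
      exact (norm_nonneg (f z)).trans (le_csSup hf.1 ⟨z, hz, rfl⟩)
    have hVnn : 0 ≤ sSup (varSet f σ₁) := le_csSup hf.2 (zero_mem_varSet f hne)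
    have hV2 : sSup (varSet (fun q => f (α.symm q)) (⇑α '' σ₁)) ≤ 2 * sSup (varSet f σ₁) := by
      apply csSup_le ⟨0, zero_mem_varSet _ hσ₂ne⟩
      exact varSet_transfer α hαs σ₁ f (sSup (varSet f σ₁)) hVnn
        (fun r hr => le_csSup hf.2 hr)
    unfold bvNorm var2
    rw [hN]
    linarith
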